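/- The functions A1 and A2 are strictly increasing on (−∞, b*) and strictly decreasing on (b*, ∞), the function A3 is strictly increasing on (b*, ∞), A1(b) → 0 and A2(b) → 0 as b → ∞, and consequently A1(b) > 0 and A2(b) > 0 for every b ≥ b*, where b* = (−γ1γ2γ3 + η(−γ1γ2 + γ2γ3 + γ1γ3))/(η γ1 γ2 γ3). -/

import Mathlib

open Filter Real

private lemma hasDerivAt_aux (a c d x : ℝ) :
    HasDerivAt (fun b => (a * b + c) * Real.exp (d * b))
      ((a + d * (a * x + c)) * Real.exp (d * x)) x := by
  have h1 : HasDerivAt (fun b : ℝ => a * b + c) a x := by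
    simpa using ((hasDerivAt_id x).const_mul a).add_const c
  have h2 : HasDerivAt (fun b : ℝ => Real.exp (d * b)) (Real.exp (d * x) * d) x := by
    simpa [Function.comp_def] using (Real.hasDerivAt_exp (d * x)).comp x ((hasDerivAt_id x).const_mul d)
  have h3 : HasDerivAt (fun b => (a * b + c) * Real.exp (d * b))
      (a * Real.exp (d * x) + (a * x + c) * (Real.exp (d * x) * d)) x := h1.mul h2
  convert h3 using 1
  ring

private lemma cont_aux (a c d : ℝ) :
    Continuous (fun b => (a * b + c) * Real.exp (d * b)) := by fun_prop

private lemma mono_Iio_aux (a c d t : ℝ) (ha : 0 < a) (hd : d < 0)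
    (ht : a + d * (a * t + c) = 0) :
    StrictMonoOn (fun b => (a * b + c) * Real.exp (d * b)) (Set.Iio t) := by
  apply strictMonoOn_of_deriv_pos (convex_Iio t) (cont_aux a c d).continuousOn
  intro x hx
  rw [interior_Iio] at hx
  rw [(hasDerivAt_aux a c d x).deriv]
  have hxt : x < t := hx
  have key : 0 < a + d * (a * x + c) := by
    nlinarith [mul_pos (mul_pos (neg_pos.2 hd) ha) (sub_pos.2 hxt)]
  exact mul_pos key (Real.exp_pos _)

private lemma anti_Ioi_aux (a c d t : ℝ) (ha : 0 < a) (hd : d < 0)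
    (ht : a + d * (a * t + c) = 0) :
    StrictAntiOn (fun b => (a * b + c) * Real.exp (d * b)) (Set.Ioi t) := by
  apply strictAntiOn_of_deriv_neg (convex_Ioi t) (cont_aux a c d).continuousOn
  intro x hx
  rw [interior_Ioi] at hx
  rw [(hasDerivAt_aux a c d x).deriv]
  have hxt : t < x := hx
  have key : a + d * (a * x + c) < 0 := by
    nlinarith [mul_pos (mul_pos (neg_pos.2 hd) ha) (sub_pos.2 hxt)]
  exact mul_neg_of_neg_of_pos key (Real.exp_pos _)

private lemma mono_Ioi_aux (a c d t : ℝ) (ha : 0 < a) (hd : 0 < d)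
    (ht : a + d * (a * t + c) = 0) :
    StrictMonoOn (fun b => (a * b + c) * Real.exp (d * b)) (Set.Ioi t) := by
  apply strictMonoOn_of_deriv_pos (convex_Ioi t) (cont_aux a c d).continuousOn
  intro x hx
  rw [interior_Ioi] at hx
  rw [(hasDerivAt_aux a c d x).deriv]
  have hxt : t < x := hx
  have key : 0 < a + d * (a * x + c) := by
    nlinarith [mul_pos (mul_pos hd ha) (sub_pos.2 hxt)]
  exact mul_pos key (Real.exp_pos _)

private lemma tendsto_aux (a c d : ℝ) (hd : d < 0) :
    Filter.Tendsto (fun b => (a * b + c) * Real.exp (d * b)) Filter.atTop (nhds 0) := by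
  have h0 : Tendsto (fun b : ℝ => -d * b) atTop atTop :=
    (tendsto_id (α := ℝ)).const_mul_atTop (by linarith)
  have h1 : Tendsto (fun b : ℝ => -(d * b) * Real.exp (d * b)) atTop (nhds 0) := by
    have := (Real.tendsto_pow_mul_exp_neg_atTop_nhds_zero 1).comp h0
    simpa [Function.comp_def, neg_mul, neg_neg] using this
  have h2 : Tendsto (fun b : ℝ => Real.exp (d * b)) atTop (nhds 0) := by
    apply Real.tendsto_exp_atBot.comp
    have := tendsto_neg_atTop_atBot.comp h0
    simpa [Function.comp_def, neg_mul, neg_neg] using this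
  have h3 : Tendsto
      (fun b : ℝ => (a / -d) * (-(d * b) * Real.exp (d * b)) + c * Real.exp (d * b))
      atTop (nhds 0) := by
    simpa using (h1.const_mul (a / -d)).add (h2.const_mul c)
  apply h3.congr
  intro b
  have hdne : d ≠ 0 := ne_of_lt hd
  field_simp

/-- Monotonicity properties of `A1`, `A2`, `A3`, decay of `A1`, `A2` at `∞`,
and positivity of `A1`, `A2` on `[b*, ∞)`. -/
theorem stmt_7 (η γ1 γ2 γ3 r : ℝ)
    (h1 : 0 < γ1) (h2 : γ1 < η) (h3 : η < γ2) (h4 : 0 < γ3) (hr : 0 < r)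
    (A1 A2 A3 : ℝ → ℝ)
    (hA1 : ∀ b : ℝ, A1 b = r / η ^ 2 *
      ((η - γ1) * (γ2 * γ3 * (η * b + 1) + η * (γ2 - γ3)) / ((γ3 + γ1) * (γ2 - γ1))) *
      Real.exp (-γ1 * b))
    (hA2 : ∀ b : ℝ, A2 b = r / η ^ 2 *
      ((γ2 - η) * (γ1 * γ3 * (η * b + 1) + η * (γ1 - γ3)) / ((γ3 + γ2) * (γ2 - γ1))) *
      Real.exp (-γ2 * b))
    (hA3 : ∀ b : ℝ, A3 b = r / η ^ 2 *
      ((η + γ3) * (γ1 * γ2 * (η * b + 1) - η * (γ1 + γ2)) / ((γ3 + γ1) * (γ2 + γ3))) *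
      Real.exp (γ3 * b))
    (bstar : ℝ)
    (hbstar : bstar = (-(γ1 * γ2 * γ3) + η * (-(γ1 * γ2) + γ2 * γ3 + γ1 * γ3))
      / (η * γ1 * γ2 * γ3)) :
    StrictMonoOn A1 (Set.Iio bstar) ∧ StrictAntiOn A1 (Set.Ioi bstar) ∧
    StrictMonoOn A2 (Set.Iio bstar) ∧ StrictAntiOn A2 (Set.Ioi bstar) ∧
    StrictMonoOn A3 (Set.Ioi bstar) ∧
    Filter.Tendsto A1 Filter.atTop (nhds 0) ∧ Filter.Tendsto A2 Filter.atTop (nhds 0) ∧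
    ∀ b : ℝ, bstar ≤ b → 0 < A1 b ∧ 0 < A2 b := by
  have hη : 0 < η := lt_trans h1 h2
  have hη2 : 0 < η ^ 2 := pow_pos hη 2
  have hb : η * γ1 * γ2 * γ3 * bstar
      = -(γ1 * γ2 * γ3) + η * (-(γ1 * γ2) + γ2 * γ3 + γ1 * γ3) := by
    have hx : η * γ1 * γ2 * γ3 ≠ 0 := ne_of_gt (mul_pos (mul_pos (mul_pos hη h1) (by linarith)) h4)
    rw [hbstar, mul_comm, div_mul_cancel₀ _ hx]
  -- constants for A1
  set K1 : ℝ := r / η ^ 2 * ((η - γ1) / ((γ3 + γ1) * (γ2 - γ1))) with hK1def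
  have hK1 : 0 < K1 :=
    mul_pos (div_pos hr hη2)
      (div_pos (by linarith) (mul_pos (by linarith) (by linarith)))
  have e1 : ∀ b : ℝ, A1 b
      = (K1 * (γ2 * γ3 * η) * b + K1 * (γ2 * γ3 + η * (γ2 - γ3)))
        * Real.exp (-γ1 * b) := by
    intro b; rw [hA1 b, hK1def]; ring
  have a1pos : 0 < K1 * (γ2 * γ3 * η) :=
    mul_pos hK1 (mul_pos (mul_pos (by linarith) h4) hη)
  have ht1 : K1 * (γ2 * γ3 * η) + (-γ1) *
      (K1 * (γ2 * γ3 * η) * bstar + K1 * (γ2 * γ3 + η * (γ2 - γ3))) = 0 := by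
    linear_combination (-K1) * hb
  -- constants for A2
  set K2 : ℝ := r / η ^ 2 * ((γ2 - η) / ((γ3 + γ2) * (γ2 - γ1))) with hK2def
  have hK2 : 0 < K2 :=
    mul_pos (div_pos hr hη2)
      (div_pos (by linarith) (mul_pos (by linarith) (by linarith)))
  have e2 : ∀ b : ℝ, A2 b
      = (K2 * (γ1 * γ3 * η) * b + K2 * (γ1 * γ3 + η * (γ1 - γ3)))
        * Real.exp (-γ2 * b) := by
    intro b; rw [hA2 b, hK2def]; ring
  have a2pos : 0 < K2 * (γ1 * γ3 * η) :=
    mul_pos hK2 (mul_pos (mul_pos h1 h4) hη)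
  have ht2 : K2 * (γ1 * γ3 * η) + (-γ2) *
      (K2 * (γ1 * γ3 * η) * bstar + K2 * (γ1 * γ3 + η * (γ1 - γ3))) = 0 := by
    linear_combination (-K2) * hb
  -- constants for A3
  set K3 : ℝ := r / η ^ 2 * ((η + γ3) / ((γ3 + γ1) * (γ2 + γ3))) with hK3def
  have hK3 : 0 < K3 :=
    mul_pos (div_pos hr hη2)
      (div_pos (by linarith) (mul_pos (by linarith) (by linarith)))
  have e3 : ∀ b : ℝ, A3 b
      = (K3 * (γ1 * γ2 * η) * b + K3 * (γ1 * γ2 - η * (γ1 + γ2)))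
        * Real.exp (γ3 * b) := by
    intro b; rw [hA3 b, hK3def]; ring
  have a3pos : 0 < K3 * (γ1 * γ2 * η) :=
    mul_pos hK3 (mul_pos (mul_pos h1 (by linarith)) hη)
  have ht3 : K3 * (γ1 * γ2 * η) + γ3 *
      (K3 * (γ1 * γ2 * η) * bstar + K3 * (γ1 * γ2 - η * (γ1 + γ2))) = 0 := by
    linear_combination K3 * hb
  refine ⟨?_, ?_, ?_, ?_, ?_, ?_, ?_, ?_⟩
  · exact (mono_Iio_aux _ _ _ _ a1pos (by linarith) ht1).congr fun b _ => (e1 b).symm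
  · exact (anti_Ioi_aux _ _ _ _ a1pos (by linarith) ht1).congr fun b _ => (e1 b).symm
  · exact (mono_Iio_aux _ _ _ _ a2pos (by linarith) ht2).congr fun b _ => (e2 b).symm
  · exact (anti_Ioi_aux _ _ _ _ a2pos (by linarith) ht2).congr fun b _ => (e2 b).symm
  · exact (mono_Ioi_aux _ _ _ _ a3pos h4 ht3).congr fun b _ => (e3 b).symm
  · exact (tendsto_aux _ _ _ (by linarith : -γ1 < 0)).congr fun b => (e1 b).symm
  · exact (tendsto_aux _ _ _ (by linarith : -γ2 < 0)).congr fun b => (e2 b).symm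
  · intro b hbge
    constructor
    · rw [hA1 b]
      refine mul_pos (mul_pos (div_pos hr hη2) (div_pos ?_ ?_)) (Real.exp_pos _)
      · apply mul_pos (by linarith)
        nlinarith [hb, h1, h4, hη, lt_trans hη h3, mul_nonneg (sub_nonneg.2 hbge)
          (le_of_lt (mul_pos (mul_pos (mul_pos hη h1) (lt_trans hη h3)) h4)),
          mul_pos (mul_pos hη (lt_trans hη h3)) h4]
      · exact mul_pos (by linarith) (by linarith)
    · rw [hA2 b]
      refine mul_pos (mul_pos (div_pos hr hη2) (div_pos ?_ ?_)) (Real.exp_pos _)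
      · apply mul_pos (by linarith)
        nlinarith [hb, h1, h4, hη, lt_trans hη h3, mul_nonneg (sub_nonneg.2 hbge)
          (le_of_lt (mul_pos (mul_pos (mul_pos hη h1) (lt_trans hη h3)) h4)),
          mul_pos (mul_pos hη h1) h4]
      · exact mul_pos (by linarith) (by linarith)
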